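/- Let η ≥ 0 and n11, n22, n12, n21 ∈ ℕ. Define L_i = (n_ii − n_ij)⁺, B_LDIC/FB = {(R1,R2) ∈ ℝ² : (L_i − η)⁺ ≤ R_i for i=1,2}, and let C_LDIC/FB be the feedback capacity region (R1 ≤ min(max(n11,n12),max(n11,n21)), R2 ≤ min(max(n22,n21),max(n22,n12)), R1+R2 ≤ min(max(n22,n21)+(n11−n21)⁺, max(n11,n12)+(n22−n12)⁺), R1,R2 ≥ 0). Similarly define Ũ_i as in the no-feedback case and N_LDIC = C_LDIC ∩ {(R1,R2): L_i ≤ R_i ≤ Ũ_i}. Then N_LDIC ⊆ C_LDIC/FB ∩ B_LDIC/FB. -/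
import Mathlib

private lemma aux_max_swap (a b c : ℝ) : max (a - c) 0 + max b c = max a c + max (b - c) 0 := by
  rcases le_total a c with h|h <;> rcases le_total b c with h'|h' <;>
    rw [show max (a-c) 0 = _ from (by first | exact max_eq_left (by linarith) | exact max_eq_right (by linarith)),
        show max (b-c) 0 = _ from (by first | exact max_eq_left (by linarith) | exact max_eq_right (by linarith)),
        show max b c = _ from (by first | exact max_eq_left h' | exact max_eq_right h'),
        show max a c = _ from (by first | exact max_eq_left h | exact max_eq_right h)] <;> ring



/-- N_LDIC ⊆ C_LDIC/FB ∩ B_LDIC/FB : the η-NE region without feedback is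
contained in the η-NE region with feedback. -/
theorem ne_region_subset_feedback_ne_region
    (η : ℝ) (hη : 0 ≤ η) (n11 n22 n12 n21 : ℕ) (R1 R2 : ℝ)
    (hR1 : 0 ≤ R1) (hR2 : 0 ≤ R2)
    -- C_LDIC constraints
    (c1 : R1 ≤ (n11 : ℝ))
    (c2 : R2 ≤ (n22 : ℝ))
    (c3 : R1 + R2 ≤ max ((n11 : ℝ) - n12) 0 + max (n22 : ℝ) (n12 : ℝ))
    (c4 : R1 + R2 ≤ max ((n22 : ℝ) - n21) 0 + max (n11 : ℝ) (n21 : ℝ))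
    (c5 : R1 + R2 ≤ max (n21 : ℝ) (max ((n11 : ℝ) - n12) 0)
            + max (n12 : ℝ) (max ((n22 : ℝ) - n21) 0))
    (c6 : 2 * R1 + R2 ≤ max (n11 : ℝ) (n21 : ℝ) + max ((n11 : ℝ) - n12) 0
            + max (n12 : ℝ) (max ((n22 : ℝ) - n21) 0))
    (c7 : R1 + 2 * R2 ≤ max (n22 : ℝ) (n12 : ℝ) + max ((n22 : ℝ) - n21) 0
            + max (n21 : ℝ) (max ((n11 : ℝ) - n12) 0))
    -- B_LDIC constraints : L_i ≤ R_i ≤ Ũ_i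
    (b1 : max ((n11 : ℝ) - n12) 0 ≤ R1)
    (b2 : max ((n22 : ℝ) - n21) 0 ≤ R2)
    (b3 : R1 ≤ (if n12 ≤ n11 then (n11 : ℝ) - min (max ((n22 : ℝ) - n21) 0) (n12 : ℝ)
                else min (max ((n12 : ℝ) - max ((n22 : ℝ) - n21) 0) 0) (n11 : ℝ)))
    (b4 : R2 ≤ (if n21 ≤ n22 then (n22 : ℝ) - min (max ((n11 : ℝ) - n12) 0) (n21 : ℝ)
                else min (max ((n21 : ℝ) - max ((n11 : ℝ) - n12) 0) 0) (n22 : ℝ))) :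
    -- C_LDIC/FB constraints
    (R1 ≤ min (max (n11 : ℝ) (n12 : ℝ)) (max (n11 : ℝ) (n21 : ℝ))) ∧
    (R2 ≤ min (max (n22 : ℝ) (n21 : ℝ)) (max (n22 : ℝ) (n12 : ℝ))) ∧
    (R1 + R2 ≤ min (max (n22 : ℝ) (n21 : ℝ) + max ((n11 : ℝ) - n21) 0)
                   (max (n11 : ℝ) (n12 : ℝ) + max ((n22 : ℝ) - n12) 0)) ∧
    -- B_LDIC/FB constraints
    (max (max ((n11 : ℝ) - n12) 0 - η) 0 ≤ R1) ∧
    (max (max ((n22 : ℝ) - n21) 0 - η) 0 ≤ R2) := by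
  refine ⟨le_min (c1.trans (le_max_left _ _)) (c1.trans (le_max_left _ _)),
    le_min (c2.trans (le_max_left _ _)) (c2.trans (le_max_left _ _)),
    le_min (c4.trans (le_of_eq (aux_max_swap _ _ _)))
      (c3.trans (le_of_eq (aux_max_swap _ _ _))),
    max_le (by linarith) hR1, max_le (by linarith) hR2⟩
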